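/- Let N = p + ℓ with p, ℓ ≥ 1, let U, Û ∈ ℝ^{N×r} each have orthonormal columns, and partition them into Υ_f, Υ̂_f ∈ ℝ^{p×r} (first p rows) and Υ_l, Υ̂_l ∈ ℝ^{p×r} (last p rows). Let Z ∈ ℝ^{r×r} be orthogonal, and assume rank(Υ_f) = rank(Υ̂_f) = r. Set A_r = Υ_f^† Υ_l and Â_r = Υ̂_f^† Υ̂_l. Then ‖A_r − Z Â_r Zᵀ‖₂ ≤ ‖Υ_f^†‖₂ · ‖U − Û Zᵀ‖₂ · (1 + √2 ‖Υ̂_f^†‖₂). -/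

import Mathlib

open Matrix

/-- The spectral (operator 2-) norm of a real matrix. -/
noncomputable def spNorm {m n : ℕ} (M : Matrix (Fin m) (Fin n) ℝ) : ℝ :=
  ‖LinearMap.toContinuousLinearMap (Matrix.toEuclideanLin M)‖

/-- The Moore–Penrose pseudoinverse of a full-column-rank real matrix,
`M^† = (MᵀM)⁻¹Mᵀ`. -/
noncomputable def pinv {m n : ℕ} (M : Matrix (Fin m) (Fin n) ℝ) : Matrix (Fin n) (Fin m) ℝ :=
  (Mᵀ * M)⁻¹ * Mᵀ

/-- The submatrix of the first `p` rows of a `(p+l) × r` matrix. -/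
def firstRows {p l r : ℕ} (U : Matrix (Fin (p + l)) (Fin r) ℝ) : Matrix (Fin p) (Fin r) ℝ :=
  U.submatrix (fun i => Fin.castAdd l i) id

/-- The submatrix of the last `p` rows of a `(p+l) × r` matrix. -/
def lastRows {p l r : ℕ} (U : Matrix (Fin (p + l)) (Fin r) ℝ) : Matrix (Fin p) (Fin r) ℝ :=
  U.submatrix (fun i => Fin.addNat i l) id

open scoped RealInnerProductSpace

set_option maxHeartbeats 1000000

namespace SP
variable {m n k : ℕ}

lemma spNorm_nonneg (M : Matrix (Fin m) (Fin n) ℝ) : 0 ≤ spNorm M :=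
  norm_nonneg _

lemma le_spNorm (M : Matrix (Fin m) (Fin n) ℝ) (x : EuclideanSpace ℝ (Fin n)) :
    ‖Matrix.toEuclideanLin M x‖ ≤ spNorm M * ‖x‖ := by
  have := (LinearMap.toContinuousLinearMap (Matrix.toEuclideanLin M)).le_opNorm x
  simpa [spNorm, LinearMap.coe_toContinuousLinearMap'] using this

lemma spNorm_le {M : Matrix (Fin m) (Fin n) ℝ} {c : ℝ} (hc : 0 ≤ c)
    (h : ∀ x : EuclideanSpace ℝ (Fin n), ‖Matrix.toEuclideanLin M x‖ ≤ c * ‖x‖) :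
    spNorm M ≤ c := by
  apply ContinuousLinearMap.opNorm_le_bound _ hc
  intro x
  simpa [LinearMap.coe_toContinuousLinearMap'] using h x

lemma toEL_mul (A : Matrix (Fin m) (Fin n) ℝ) (B : Matrix (Fin n) (Fin k) ℝ)
    (x : EuclideanSpace ℝ (Fin k)) :
    Matrix.toEuclideanLin (A * B) x = Matrix.toEuclideanLin A (Matrix.toEuclideanLin B x) := by
  simp only [Matrix.toEuclideanLin_apply, Equiv.apply_symm_apply, Matrix.mulVec_mulVec]

end SP

namespace SP2
variable {m n k : ℕ}
open SP

lemma inner_transpose (M : Matrix (Fin m) (Fin n) ℝ) (x : EuclideanSpace ℝ (Fin m))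
    (y : EuclideanSpace ℝ (Fin n)) :
    ⟪Matrix.toEuclideanLin Mᵀ x, y⟫ = ⟪x, Matrix.toEuclideanLin M y⟫ := by
  have h : Matrix.toEuclideanLin Mᵀ = LinearMap.adjoint (Matrix.toEuclideanLin M) := by
    rw [← Matrix.conjTranspose_eq_transpose_of_trivial]
    exact Matrix.toEuclideanLin_conjTranspose_eq_adjoint M
  rw [h, LinearMap.adjoint_inner_left]

lemma spNorm_mul_le (A : Matrix (Fin m) (Fin n) ℝ) (B : Matrix (Fin n) (Fin k) ℝ) :
    spNorm (A * B) ≤ spNorm A * spNorm B := by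
  apply spNorm_le (mul_nonneg (spNorm_nonneg A) (spNorm_nonneg B))
  intro x
  rw [toEL_mul, mul_assoc]
  calc ‖Matrix.toEuclideanLin A (Matrix.toEuclideanLin B x)‖
      ≤ spNorm A * ‖Matrix.toEuclideanLin B x‖ := le_spNorm A _
    _ ≤ spNorm A * (spNorm B * ‖x‖) := by
        exact mul_le_mul_of_nonneg_left (le_spNorm B x) (spNorm_nonneg A)

lemma spNorm_transpose_le (M : Matrix (Fin m) (Fin n) ℝ) : spNorm Mᵀ ≤ spNorm M := by
  apply spNorm_le (spNorm_nonneg M)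
  intro x
  by_cases hx : Matrix.toEuclideanLin Mᵀ x = 0
  · simp [hx, mul_nonneg (spNorm_nonneg M) (norm_nonneg x)]
  · have h1 : ‖Matrix.toEuclideanLin Mᵀ x‖ ^ 2
        = ⟪Matrix.toEuclideanLin Mᵀ x, Matrix.toEuclideanLin Mᵀ x⟫ := by
      rw [real_inner_self_eq_norm_sq]
    have h2 : ⟪Matrix.toEuclideanLin Mᵀ x, Matrix.toEuclideanLin Mᵀ x⟫
        = ⟪x, Matrix.toEuclideanLin M (Matrix.toEuclideanLin Mᵀ x)⟫ := by
      exact inner_transpose M x _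
    have h3 : ⟪x, Matrix.toEuclideanLin M (Matrix.toEuclideanLin Mᵀ x)⟫
        ≤ ‖x‖ * (spNorm M * ‖Matrix.toEuclideanLin Mᵀ x‖) :=
      le_trans (real_inner_le_norm _ _)
        (mul_le_mul_of_nonneg_left (le_spNorm M _) (norm_nonneg x))
    have hpos : 0 < ‖Matrix.toEuclideanLin Mᵀ x‖ := norm_pos_iff.mpr hx
    nlinarith [norm_nonneg x, hpos]

lemma spNorm_transpose (M : Matrix (Fin m) (Fin n) ℝ) : spNorm Mᵀ = spNorm M :=
  le_antisymm (spNorm_transpose_le M)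
    (by simpa using spNorm_transpose_le Mᵀ)

end SP2

namespace SP3
variable {m n k p : ℕ}
open SP SP2

lemma toEL_one (x : EuclideanSpace ℝ (Fin n)) :
    Matrix.toEuclideanLin (1 : Matrix (Fin n) (Fin n) ℝ) x = x := by
  simp [Matrix.toEuclideanLin_apply]

lemma toEL_sub (A B : Matrix (Fin m) (Fin n) ℝ) (x : EuclideanSpace ℝ (Fin n)) :
    Matrix.toEuclideanLin (A - B) x
      = Matrix.toEuclideanLin A x - Matrix.toEuclideanLin B x := by
  rw [map_sub]; rfl

/-- For a symmetric idempotent `S`, `⟪Sx, x - Sx⟫ = 0`. -/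
lemma proj_inner_zero {S : Matrix (Fin p) (Fin p) ℝ} (hsymm : Sᵀ = S)
    (hidem : S * S = S) (x : EuclideanSpace ℝ (Fin p)) :
    ⟪Matrix.toEuclideanLin S x, x - Matrix.toEuclideanLin S x⟫ = 0 := by
  set u := Matrix.toEuclideanLin S x with hu
  have h1 : ⟪u, u⟫ = ⟪x, u⟫ := by
    calc ⟪u, u⟫ = ⟪Matrix.toEuclideanLin Sᵀ x, u⟫ := by rw [hsymm]
      _ = ⟪x, Matrix.toEuclideanLin S u⟫ := inner_transpose S x u
      _ = ⟪x, Matrix.toEuclideanLin (S * S) x⟫ := by rw [toEL_mul]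
      _ = ⟪x, u⟫ := by rw [hidem]
  rw [inner_sub_right, real_inner_comm u x] at *
  rw [h1]; ring

lemma proj_pythagoras {S : Matrix (Fin p) (Fin p) ℝ} (hsymm : Sᵀ = S)
    (hidem : S * S = S) (x : EuclideanSpace ℝ (Fin p)) :
    ‖Matrix.toEuclideanLin S x‖ ^ 2 + ‖x - Matrix.toEuclideanLin S x‖ ^ 2 = ‖x‖ ^ 2 := by
  have h0 := proj_inner_zero hsymm hidem x
  have := norm_add_sq_real (Matrix.toEuclideanLin S x) (x - Matrix.toEuclideanLin S x)
  rw [h0] at this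
  have hx : Matrix.toEuclideanLin S x + (x - Matrix.toEuclideanLin S x) = x := by abel
  rw [hx] at this
  linarith

lemma proj_apply_norm_le {S : Matrix (Fin p) (Fin p) ℝ} (hsymm : Sᵀ = S)
    (hidem : S * S = S) (x : EuclideanSpace ℝ (Fin p)) :
    ‖Matrix.toEuclideanLin S x‖ ≤ ‖x‖ := by
  have := proj_pythagoras hsymm hidem x
  have h2 : (0:ℝ) ≤ ‖x - Matrix.toEuclideanLin S x‖ ^ 2 := sq_nonneg _
  have h3 : ‖Matrix.toEuclideanLin S x‖ ^ 2 ≤ ‖x‖ ^ 2 := by linarith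
  nlinarith [norm_nonneg (Matrix.toEuclideanLin S x), norm_nonneg x]

end SP3

namespace SP4
variable {q N r : ℕ}
open SP SP2 SP3

lemma toEL_submatrix (f : Fin q → Fin N) (M : Matrix (Fin N) (Fin r) ℝ)
    (v : EuclideanSpace ℝ (Fin r)) (i : Fin q) :
    Matrix.toEuclideanLin (M.submatrix f id) v i = Matrix.toEuclideanLin M v (f i) := by
  rfl

lemma norm_submatrix_le (f : Fin q → Fin N) (hf : Function.Injective f)
    (M : Matrix (Fin N) (Fin r) ℝ) (v : EuclideanSpace ℝ (Fin r)) :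
    ‖Matrix.toEuclideanLin (M.submatrix f id) v‖ ≤ ‖Matrix.toEuclideanLin M v‖ := by
  set x := Matrix.toEuclideanLin (M.submatrix f id) v
  set y := Matrix.toEuclideanLin M v
  have hx : ‖x‖ = Real.sqrt (∑ i, ‖x i‖ ^ 2) := EuclideanSpace.norm_eq x
  have hy : ‖y‖ = Real.sqrt (∑ j, ‖y j‖ ^ 2) := EuclideanSpace.norm_eq y
  rw [hx, hy]
  apply Real.sqrt_le_sqrt
  have hsum : ∑ i, ‖x i‖ ^ 2 = ∑ i, ‖y (f i)‖ ^ 2 := by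
    apply Finset.sum_congr rfl
    intro i _
    rw [show x i = y (f i) from toEL_submatrix f M v i]
  rw [hsum]
  have himg : ∑ i, ‖y (f i)‖ ^ 2 = ∑ j ∈ Finset.univ.image f, ‖y j‖ ^ 2 := by
    rw [Finset.sum_image (fun a _ b _ h => hf h)]
  rw [himg]
  apply Finset.sum_le_sum_of_subset_of_nonneg (Finset.subset_univ _)
  intro j _ _
  positivity

end SP4

namespace SP5
variable {N r : ℕ}
open SP SP2 SP3

lemma mulVec_injective_of_rank {M : Matrix (Fin N) (Fin r) ℝ} (h : M.rank = r) :
    Function.Injective M.mulVecLin := by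
  rw [← LinearMap.ker_eq_bot]
  have h1 := LinearMap.finrank_range_add_finrank_ker M.mulVecLin
  have h2 : Module.finrank ℝ (Fin r → ℝ) = r := by simp
  rw [h2] at h1
  have h3 : Module.finrank ℝ (LinearMap.range M.mulVecLin) = r := h
  have h4 : Module.finrank ℝ (LinearMap.ker M.mulVecLin) = 0 := by omega
  exact Submodule.finrank_eq_zero.mp h4

lemma isUnit_gram {M : Matrix (Fin N) (Fin r) ℝ} (h : M.rank = r) :
    IsUnit (Mᵀ * M) := by
  rw [← Matrix.mulVec_injective_iff_isUnit]
  intro a b hab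
  apply mulVec_injective_of_rank h
  show M *ᵥ a = M *ᵥ b
  have hdot : ∀ c : Fin r → ℝ, (Mᵀ * M) *ᵥ c = Mᵀ *ᵥ (M *ᵥ c) := by
    intro c; rw [Matrix.mulVec_mulVec]
  have key : dotProduct (a - b) ((Mᵀ * M) *ᵥ (a - b)) = 0 := by
    have : (Mᵀ * M) *ᵥ (a - b) = 0 := by
      rw [Matrix.mulVec_sub]
      rw [show (Mᵀ * M) *ᵥ a = (Mᵀ * M) *ᵥ b from hab]
      simp
    rw [this, dotProduct_zero]
  have key2 : dotProduct (M *ᵥ (a - b)) (M *ᵥ (a - b)) = 0 := by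
    rw [hdot, Matrix.dotProduct_mulVec (a-b) Mᵀ _, Matrix.vecMul_transpose] at key
    exact key
  have : M *ᵥ (a - b) = 0 := by
    have hsq : ∀ v : Fin N → ℝ, dotProduct v v = 0 → v = 0 := by
      intro v hv
      funext i
      have : ∑ j, v j * v j = 0 := hv
      have hz := Finset.sum_eq_zero_iff_of_nonneg (fun j _ => mul_self_nonneg (v j)) |>.mp this i (Finset.mem_univ i)
      have := mul_self_eq_zero.mp hz
      simpa using this
    exact hsq _ key2
  rw [Matrix.mulVec_sub] at this
  have := sub_eq_zero.mp this
  exact this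

end SP5

namespace SP6
variable {m n k p l r : ℕ}
open SP SP2 SP3 SP4 SP5

lemma spNorm_sub_le (A B : Matrix (Fin m) (Fin n) ℝ) :
    spNorm (A - B) ≤ spNorm A + spNorm B := by
  apply spNorm_le (add_nonneg (spNorm_nonneg A) (spNorm_nonneg B))
  intro x
  rw [toEL_sub]
  calc ‖Matrix.toEuclideanLin A x - Matrix.toEuclideanLin B x‖
      ≤ ‖Matrix.toEuclideanLin A x‖ + ‖Matrix.toEuclideanLin B x‖ := norm_sub_le _ _
    _ ≤ spNorm A * ‖x‖ + spNorm B * ‖x‖ := add_le_add (le_spNorm A x) (le_spNorm B x)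
    _ = (spNorm A + spNorm B) * ‖x‖ := by ring

lemma spNorm_proj_le {S : Matrix (Fin p) (Fin p) ℝ} (hsymm : Sᵀ = S) (hidem : S * S = S) :
    spNorm S ≤ 1 := by
  apply spNorm_le zero_le_one
  intro x
  simpa using proj_apply_norm_le hsymm hidem x

lemma firstRows_sub (A B : Matrix (Fin (p + l)) (Fin r) ℝ) :
    firstRows (A - B) = firstRows A - firstRows B := by
  ext i j; simp [firstRows]

lemma lastRows_sub (A B : Matrix (Fin (p + l)) (Fin r) ℝ) :
    lastRows (A - B) = lastRows A - lastRows B := by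
  ext i j; simp [lastRows]

lemma spNorm_firstRows_le (A : Matrix (Fin (p + l)) (Fin r) ℝ) :
    spNorm (firstRows A) ≤ spNorm A := by
  apply spNorm_le (spNorm_nonneg A)
  intro x
  exact le_trans (norm_submatrix_le _ (Fin.castAdd_injective p l) A x) (le_spNorm A x)

lemma spNorm_lastRows_le (A : Matrix (Fin (p + l)) (Fin r) ℝ) :
    spNorm (lastRows A) ≤ spNorm A := by
  apply spNorm_le (spNorm_nonneg A)
  intro x
  have hinj : Function.Injective (fun i : Fin p => Fin.addNat i l) := by
    intro a b h
    have := congrArg Fin.val h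
    simp only [Fin.addNat] at this
    exact Fin.ext (by omega)
  exact le_trans (norm_submatrix_le _ hinj A x) (le_spNorm A x)

lemma norm_orthonormal {N : ℕ} {V : Matrix (Fin N) (Fin r) ℝ} (hV : Vᵀ * V = 1)
    (x : EuclideanSpace ℝ (Fin r)) : ‖Matrix.toEuclideanLin V x‖ = ‖x‖ := by
  have h : ‖Matrix.toEuclideanLin V x‖ ^ 2 = ‖x‖ ^ 2 := by
    rw [← real_inner_self_eq_norm_sq, ← real_inner_self_eq_norm_sq]
    calc ⟪Matrix.toEuclideanLin V x, Matrix.toEuclideanLin V x⟫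
        = ⟪x, Matrix.toEuclideanLin Vᵀ (Matrix.toEuclideanLin V x)⟫ := by
          rw [← inner_transpose V (Matrix.toEuclideanLin V x) x, real_inner_comm]
      _ = ⟪x, Matrix.toEuclideanLin (Vᵀ * V) x⟫ := by rw [toEL_mul]
      _ = ⟪x, x⟫ := by rw [hV, toEL_one]
  have h1 := norm_nonneg (Matrix.toEuclideanLin V x)
  have h2 := norm_nonneg x
  nlinarith

lemma spNorm_orthonormal_le {N : ℕ} {V : Matrix (Fin N) (Fin r) ℝ} (hV : Vᵀ * V = 1) :
    spNorm V ≤ 1 := by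
  apply spNorm_le zero_le_one
  intro x
  rw [norm_orthonormal hV x, one_mul]

end SP6

namespace SP7
variable {N r : ℕ}
open SP SP2 SP3 SP4 SP5 SP6

lemma gap (F F' : Matrix (Fin N) (Fin r) ℝ) (Fd F'd : Matrix (Fin r) (Fin N) ℝ)
    (hFdF : Fd * F = 1) (hF'dF' : F'd * F' = 1)
    (hPsymm : (F * Fd)ᵀ = F * Fd) (hQsymm : (F' * F'd)ᵀ = F' * F'd)
    (hlt : spNorm ((1 - F * Fd) * (F' * F'd)) < 1) :
    spNorm ((F * Fd) * (1 - F' * F'd)) ≤ spNorm ((1 - F * Fd) * (F' * F'd)) := by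
  set P := F * Fd with hP
  set Q := F' * F'd with hQ
  set t := spNorm ((1 - P) * Q) with ht
  have ht0 : 0 ≤ t := spNorm_nonneg _
  have hPidem : P * P = P := by
    rw [hP]
    calc F * Fd * (F * Fd) = F * ((Fd * F) * Fd) := by simp only [Matrix.mul_assoc]
      _ = F * Fd := by rw [hFdF, Matrix.one_mul]
  have hQidem : Q * Q = Q := by
    rw [hQ]
    calc F' * F'd * (F' * F'd) = F' * ((F'd * F') * F'd) := by simp only [Matrix.mul_assoc]
      _ = F' * F'd := by rw [hF'dF', Matrix.one_mul]
  -- K and its invertibility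
  set K := Fd * F' with hK
  have hQF' : Q * F' = F' := by
    rw [hQ, Matrix.mul_assoc, hF'dF', Matrix.mul_one]
  have hPF' : P * F' = F * K := by
    rw [hP, hK, Matrix.mul_assoc]
  have hEinj : Function.Injective (Matrix.toEuclideanLin K) := by
    intro x1 x2 h12
    have hc : Matrix.toEuclideanLin K (x1 - x2) = 0 := by rw [map_sub, h12, sub_self]
    set c := x1 - x2 with hcdef
    set z := Matrix.toEuclideanLin F' c with hz
    have hQz : Matrix.toEuclideanLin Q z = z := by
      rw [hz, ← toEL_mul, hQF']
    have hPz : Matrix.toEuclideanLin P z = 0 := by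
      rw [hz, ← toEL_mul, hPF', toEL_mul, hc, map_zero]
    have hzfix : Matrix.toEuclideanLin ((1 - P) * Q) z = z := by
      rw [toEL_mul, hQz, toEL_sub, toEL_one, hPz, sub_zero]
    have hznorm : ‖z‖ ≤ t * ‖z‖ := by
      conv_lhs => rw [← hzfix]
      exact le_spNorm _ z
    have hz0 : z = 0 := by
      by_contra hne
      have : 0 < ‖z‖ := norm_pos_iff.mpr hne
      nlinarith
    have hc0 : c = 0 := by
      have : Matrix.toEuclideanLin (F'd * F') c = Matrix.toEuclideanLin F'd z := by
        rw [toEL_mul, hz]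
      rw [hF'dF'] at this
      rw [hz0, map_zero] at this
      rw [← toEL_one c, this]  -- c = E 1 c = 0
    exact sub_eq_zero.mp (hcdef ▸ hc0)
  have hKunit : IsUnit K := by
    rw [← Matrix.mulVec_injective_iff_isUnit]
    intro a b hab
    have : Matrix.toEuclideanLin K ((WithLp.equiv 2 (Fin r → ℝ)).symm a)
        = Matrix.toEuclideanLin K ((WithLp.equiv 2 (Fin r → ℝ)).symm b) := by
      rw [Matrix.toEuclideanLin_apply, Matrix.toEuclideanLin_apply]
      exact congrArg (WithLp.toLp 2) hab
    have := hEinj this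
    exact (Equiv.symm (WithLp.equiv 2 (Fin r → ℝ))).injective this
  have hKdet : IsUnit K.det := Matrix.isUnit_iff_isUnit_det K |>.mp hKunit
  have hKK : K * K⁻¹ = 1 := Matrix.mul_nonsing_inv K hKdet
  -- the auxiliary matrix R
  set R := F' * (K⁻¹ * Fd) with hR
  have hPR : P * R = P := by
    rw [hP, hR]
    calc F * Fd * (F' * (K⁻¹ * Fd)) = F * ((Fd * F') * K⁻¹) * Fd := by
          simp only [Matrix.mul_assoc]
      _ = F * Fd := by rw [← hK, hKK, Matrix.mul_one]
  have hQR : Q * R = R := by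
    rw [hQ, hR]
    calc F' * F'd * (F' * (K⁻¹ * Fd)) = F' * ((F'd * F') * (K⁻¹ * Fd)) := by
          simp only [Matrix.mul_assoc]
      _ = F' * (K⁻¹ * Fd) := by rw [hF'dF', Matrix.one_mul]
  -- per-vector estimate for (1 - Q) * P
  have hmain : ∀ x : EuclideanSpace ℝ (Fin N),
      ‖Matrix.toEuclideanLin ((1 - Q) * P) x‖ ≤ t * ‖x‖ := by
    intro x
    set y := Matrix.toEuclideanLin P x with hy
    set z := Matrix.toEuclideanLin R x with hzz
    have hgoal_eq : Matrix.toEuclideanLin ((1 - Q) * P) x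
        = y - Matrix.toEuclideanLin Q y := by
      rw [toEL_mul, ← hy, toEL_sub, toEL_one]
    have hPz : Matrix.toEuclideanLin P z = y := by
      rw [hzz, ← toEL_mul, hPR]
    have hQz : Matrix.toEuclideanLin Q z = z := by
      rw [hzz, ← toEL_mul, hQR]
    have hPy : Matrix.toEuclideanLin P y = y := by
      rw [hy, ← toEL_mul, hPidem]
    -- inner product identity
    have hinner : ⟪Matrix.toEuclideanLin Q y, z⟫ = ‖y‖ ^ 2 := by
      calc ⟪Matrix.toEuclideanLin Q y, z⟫
          = ⟪Matrix.toEuclideanLin Qᵀ y, z⟫ := by rw [hQsymm]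
        _ = ⟪y, Matrix.toEuclideanLin Q z⟫ := inner_transpose Q y z
        _ = ⟪y, z⟫ := by rw [hQz]
        _ = ⟪Matrix.toEuclideanLin Pᵀ y, z⟫ := by rw [hPsymm, hPy]
        _ = ⟪y, Matrix.toEuclideanLin P z⟫ := inner_transpose P y z
        _ = ⟪y, y⟫ := by rw [hPz]
        _ = ‖y‖ ^ 2 := real_inner_self_eq_norm_sq y
    -- bound on ‖z‖
    have hz2 : (1 - t ^ 2) * ‖z‖ ^ 2 ≤ ‖y‖ ^ 2 := by
      have hpyth := proj_pythagoras hPsymm hPidem z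
      rw [hPz] at hpyth
      have h1P : z - y = Matrix.toEuclideanLin ((1 - P) * Q) z := by
        rw [toEL_mul, hQz, toEL_sub, toEL_one, hPz]
      have hb : ‖z - y‖ ≤ t * ‖z‖ := by rw [h1P]; exact le_spNorm _ z
      nlinarith [norm_nonneg (z - y), norm_nonneg z]
    have hyx : ‖y‖ ≤ ‖x‖ := by
      rw [hy]; exact proj_apply_norm_le hPsymm hPidem x
    by_cases hy0 : y = 0
    · rw [hgoal_eq, hy0, map_zero, sub_zero, norm_zero]
      positivity
    · have hy0' : 0 < ‖y‖ := norm_pos_iff.mpr hy0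
      have hz0 : z ≠ 0 := by
        intro h0
        rw [h0, inner_zero_right] at hinner
        nlinarith
      have hz0' : 0 < ‖z‖ := norm_pos_iff.mpr hz0
      have hcs : ‖y‖ ^ 2 ≤ ‖Matrix.toEuclideanLin Q y‖ * ‖z‖ := by
        rw [← hinner]; exact real_inner_le_norm _ _
      have hpythQ := proj_pythagoras hQsymm hQidem y
      -- ‖Qy‖² ≥ (1 - t²)‖y‖²
      have hQy2 : (1 - t ^ 2) * ‖y‖ ^ 2 ≤ ‖Matrix.toEuclideanLin Q y‖ ^ 2 := by
        have hQynn := norm_nonneg (Matrix.toEuclideanLin Q y)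
        have h1t : 0 < 1 - t ^ 2 := by nlinarith
        have h4 : ‖y‖ ^ 2 * ‖y‖ ^ 2 ≤ (‖Matrix.toEuclideanLin Q y‖ * ‖z‖)
            * (‖Matrix.toEuclideanLin Q y‖ * ‖z‖) :=
          mul_le_mul hcs hcs (by positivity) (by positivity)
        have h5 := mul_le_mul_of_nonneg_left hz2 (mul_nonneg hQynn hQynn)
        have h6 := mul_le_mul_of_nonneg_left h4 h1t.le
        nlinarith [mul_pos hy0' hy0']
      have hfin : ‖y - Matrix.toEuclideanLin Q y‖ ^ 2 ≤ t ^ 2 * ‖y‖ ^ 2 := by nlinarith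
      rw [hgoal_eq]
      have h1 : ‖y - Matrix.toEuclideanLin Q y‖ ≤ t * ‖y‖ := by
        have := norm_nonneg (y - Matrix.toEuclideanLin Q y)
        nlinarith [mul_nonneg ht0 (le_of_lt hy0')]
      calc ‖y - Matrix.toEuclideanLin Q y‖ ≤ t * ‖y‖ := h1
        _ ≤ t * ‖x‖ := mul_le_mul_of_nonneg_left hyx ht0
  have hgap : spNorm ((1 - Q) * P) ≤ t := spNorm_le ht0 hmain
  have htr : (( (1 - Q) * P )ᵀ : Matrix (Fin N) (Fin N) ℝ) = P * (1 - Q) := by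
    rw [Matrix.transpose_mul, hPsymm, Matrix.transpose_sub, Matrix.transpose_one, hQsymm]
  calc spNorm (P * (1 - Q)) = spNorm (((1 - Q) * P)ᵀ) := by rw [htr]
    _ = spNorm ((1 - Q) * P) := spNorm_transpose _
    _ ≤ t := hgap

end SP7

namespace SP8
open SP SP2 SP3 SP4 SP5 SP6 SP7

lemma sqrt2_bound {a b c : ℝ} (ha : 0 ≤ a) (hb : 0 ≤ b) (hc : 0 ≤ c)
    (h : a ^ 2 + b ^ 2 ≤ c ^ 2) : a + b ≤ Real.sqrt 2 * c := by
  have h1 : (a + b) ^ 2 ≤ 2 * c ^ 2 := by nlinarith [sq_nonneg (a - b)]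
  have h2 : Real.sqrt ((a + b) ^ 2) ≤ Real.sqrt (2 * c ^ 2) := Real.sqrt_le_sqrt h1
  rw [Real.sqrt_sq (by positivity)] at h2
  rw [Real.sqrt_mul (by norm_num) (c ^ 2), Real.sqrt_sq hc] at h2
  exact h2

lemma spNorm_neg {m n : ℕ} (M : Matrix (Fin m) (Fin n) ℝ) : spNorm (-M) = spNorm M := by
  unfold spNorm
  rw [map_neg, map_neg, norm_neg]

lemma main_lemma {p l r : ℕ} (U V : Matrix (Fin (p + l)) (Fin r) ℝ)
    (hV : Vᵀ * V = 1)
    (hU1 : IsUnit ((firstRows U)ᵀ * firstRows U))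
    (hV1 : IsUnit ((firstRows V)ᵀ * firstRows V)) :
    spNorm (pinv (firstRows U) * lastRows U - pinv (firstRows V) * lastRows V) ≤
      spNorm (pinv (firstRows U)) * spNorm (U - V) *
        (1 + Real.sqrt 2 * spNorm (pinv (firstRows V))) := by
  set F := firstRows U with hF
  set L := lastRows U with hL
  set F' := firstRows V with hF'
  set L' := lastRows V with hL'
  set Fd := pinv F with hFd
  set F'd := pinv F' with hF'd
  have hFdF : Fd * F = 1 := by
    rw [hFd]
    show (Fᵀ * F)⁻¹ * Fᵀ * F = 1
    rw [Matrix.mul_assoc]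
    exact Matrix.nonsing_inv_mul _ ((Matrix.isUnit_iff_isUnit_det _).mp hU1)
  have hF'dF' : F'd * F' = 1 := by
    rw [hF'd]
    show (F'ᵀ * F')⁻¹ * F'ᵀ * F' = 1
    rw [Matrix.mul_assoc]
    exact Matrix.nonsing_inv_mul _ ((Matrix.isUnit_iff_isUnit_det _).mp hV1)
  have hsymm_gen : ∀ (G : Matrix (Fin p) (Fin r) ℝ), (G * pinv G)ᵀ = G * pinv G := by
    intro G
    show (G * ((Gᵀ * G)⁻¹ * Gᵀ))ᵀ = G * ((Gᵀ * G)⁻¹ * Gᵀ)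
    rw [Matrix.transpose_mul, Matrix.transpose_mul, Matrix.transpose_transpose,
      Matrix.transpose_nonsing_inv, Matrix.transpose_mul, Matrix.transpose_transpose,
      ← Matrix.mul_assoc]
  have hPsymm : (F * Fd)ᵀ = F * Fd := hsymm_gen F
  have hQsymm : (F' * F'd)ᵀ = F' * F'd := hsymm_gen F'
  set P := F * Fd with hP
  set Q := F' * F'd with hQ
  have hPidem : P * P = P := by
    rw [hP]
    calc F * Fd * (F * Fd) = F * ((Fd * F) * Fd) := by simp only [Matrix.mul_assoc]
      _ = F * Fd := by rw [hFdF, Matrix.one_mul]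
  have hQidem : Q * Q = Q := by
    rw [hQ]
    calc F' * F'd * (F' * F'd) = F' * ((F'd * F') * F'd) := by simp only [Matrix.mul_assoc]
      _ = F' * F'd := by rw [hF'dF', Matrix.one_mul]
  set ε := spNorm (U - V) with hε
  set α := spNorm Fd with hα
  set β := spNorm F'd with hβ
  have hε0 : 0 ≤ ε := spNorm_nonneg _
  have hα0 : 0 ≤ α := spNorm_nonneg _
  have hβ0 : 0 ≤ β := spNorm_nonneg _
  -- difference bounds
  have hVU : spNorm (V - U) = ε := by
    rw [hε, ← spNorm_neg (V - U), neg_sub]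
  have hEf : spNorm (F - F') ≤ ε := by
    have : F - F' = firstRows (U - V) := by rw [firstRows_sub]
    rw [this]; exact spNorm_firstRows_le _
  have hEf' : spNorm (F' - F) ≤ ε := by
    have : F' - F = firstRows (V - U) := by rw [firstRows_sub]
    rw [this, ← hVU]; exact spNorm_firstRows_le _
  have hEl : spNorm (L - L') ≤ ε := by
    have : L - L' = lastRows (U - V) := by rw [lastRows_sub]
    rw [this]; exact spNorm_lastRows_le _
  have hL'1 : spNorm L' ≤ 1 :=
    le_trans (spNorm_lastRows_le V) (spNorm_orthonormal_le hV)
  -- 1 - P, 1 - Q are projections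
  have h1Psymm : ((1 : Matrix (Fin p) (Fin p) ℝ) - P)ᵀ = 1 - P := by
    rw [Matrix.transpose_sub, Matrix.transpose_one, hPsymm]
  have h1Qsymm : ((1 : Matrix (Fin p) (Fin p) ℝ) - Q)ᵀ = 1 - Q := by
    rw [Matrix.transpose_sub, Matrix.transpose_one, hQsymm]
  have h1Pidem : ((1 : Matrix (Fin p) (Fin p) ℝ) - P) * (1 - P) = 1 - P := by
    simp only [Matrix.mul_sub, Matrix.sub_mul, Matrix.mul_one, Matrix.one_mul, hPidem]
    abel
  have h1Qidem : ((1 : Matrix (Fin p) (Fin p) ℝ) - Q) * (1 - Q) = 1 - Q := by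
    simp only [Matrix.mul_sub, Matrix.sub_mul, Matrix.mul_one, Matrix.one_mul, hQidem]
    abel
  -- bound on (1 - P) * Q
  have h1PQ : spNorm ((1 - P) * Q) ≤ ε * β := by
    have hid : (1 - P) * Q = ((1 - P) * (F' - F)) * F'd := by
      have h0 : ((1 : Matrix (Fin p) (Fin p) ℝ) - P) * F = 0 := by
        rw [Matrix.sub_mul, Matrix.one_mul, hP, Matrix.mul_assoc, hFdF, Matrix.mul_one,
          sub_self]
      rw [Matrix.mul_sub, h0, sub_zero, hQ, ← Matrix.mul_assoc]
    rw [hid]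
    calc spNorm ((1 - P) * (F' - F) * F'd)
        ≤ spNorm ((1 - P) * (F' - F)) * β := spNorm_mul_le _ _
      _ ≤ (spNorm (1 - P) * spNorm (F' - F)) * β := by
          exact mul_le_mul_of_nonneg_right (spNorm_mul_le _ _) hβ0
      _ ≤ (1 * ε) * β := by
          apply mul_le_mul_of_nonneg_right _ hβ0
          exact mul_le_mul (spNorm_proj_le h1Psymm h1Pidem) hEf' (spNorm_nonneg _) zero_le_one
      _ = ε * β := by ring
  -- the crux bound on P * (1 - Q)
  have hM2 : spNorm (P * (1 - Q)) ≤ ε * β := by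
    by_cases hcase : spNorm ((1 - P) * Q) < 1
    · exact le_trans (gap F F' Fd F'd hFdF hF'dF' hPsymm hQsymm hcase) h1PQ
    · push_neg at hcase
      have h1εβ : 1 ≤ ε * β := le_trans hcase h1PQ
      calc spNorm (P * (1 - Q)) ≤ spNorm P * spNorm (1 - Q) := spNorm_mul_le _ _
        _ ≤ 1 * 1 := mul_le_mul (spNorm_proj_le hPsymm hPidem)
            (spNorm_proj_le h1Qsymm h1Qidem) (spNorm_nonneg _) zero_le_one
        _ ≤ ε * β := by linarith
  have hM1 : spNorm ((F - F') * F'd) ≤ ε * β :=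
    le_trans (spNorm_mul_le _ _) (mul_le_mul_of_nonneg_right hEf hβ0)
  -- the main identity
  set A' := F'd * L' with hA'
  set T := (F - F') * A' - P * ((1 - Q) * L') with hT
  have hDid : Fd * L - F'd * L' = Fd * ((L - L') - T) := by
    have e1 : ∀ (X : Matrix (Fin r) (Fin r) ℝ), Fd * (F * X) = X := by
      intro X; rw [← Matrix.mul_assoc, hFdF, Matrix.one_mul]
    rw [hT, hP, hQ, hA']
    simp only [Matrix.mul_sub, Matrix.sub_mul, Matrix.mul_one, Matrix.one_mul,
      Matrix.mul_assoc, e1]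
    abel
  -- bound on T
  have hTbound : spNorm T ≤ Real.sqrt 2 * (ε * β) := by
    have hM1' : T = ((F - F') * F'd) * (Q * L') - (P * (1 - Q)) * ((1 - Q) * L') := by
      have e2 : ((F - F') * F'd) * (Q * L') = (F - F') * A' := by
        rw [hQ, hA']
        calc (F - F') * F'd * (F' * F'd * L')
            = (F - F') * ((F'd * F') * (F'd * L')) := by simp only [Matrix.mul_assoc]
          _ = (F - F') * (F'd * L') := by rw [hF'dF', Matrix.one_mul]
      have e3 : (P * (1 - Q)) * ((1 - Q) * L') = P * ((1 - Q) * L') := by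
        calc P * (1 - Q) * ((1 - Q) * L') = P * (((1 - Q) * (1 - Q)) * L') := by
              simp only [Matrix.mul_assoc]
          _ = P * ((1 - Q) * L') := by rw [h1Qidem]
      rw [hT, e2, e3]
    apply spNorm_le (by positivity)
    intro x
    set w := Matrix.toEuclideanLin L' x with hw
    have hwx : ‖w‖ ≤ ‖x‖ := by
      calc ‖w‖ ≤ spNorm L' * ‖x‖ := le_spNorm L' x
        _ ≤ 1 * ‖x‖ := mul_le_mul_of_nonneg_right hL'1 (norm_nonneg x)
        _ = ‖x‖ := one_mul _
    set a := Matrix.toEuclideanLin Q w with ha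
    have hbw : Matrix.toEuclideanLin ((1 - Q) * L') x = w - a := by
      rw [toEL_mul, ← hw, toEL_sub, toEL_one, ha]
    have haw : Matrix.toEuclideanLin (Q * L') x = a := by
      rw [toEL_mul, ← hw, ha]
    have hTx : Matrix.toEuclideanLin T x
        = Matrix.toEuclideanLin ((F - F') * F'd) a
          - Matrix.toEuclideanLin (P * (1 - Q)) (w - a) := by
      rw [hM1', toEL_sub, toEL_mul ((F - F') * F'd) (Q * L'),
        toEL_mul (P * (1 - Q)) ((1 - Q) * L'), haw, hbw]
    have hpyth : ‖a‖ ^ 2 + ‖w - a‖ ^ 2 = ‖w‖ ^ 2 := proj_pythagoras hQsymm hQidem w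
    have hsum : ‖a‖ + ‖w - a‖ ≤ Real.sqrt 2 * ‖w‖ :=
      sqrt2_bound (norm_nonneg a) (norm_nonneg (w - a)) (norm_nonneg w) (le_of_eq hpyth)
    have hεβ0 : 0 ≤ ε * β := mul_nonneg hε0 hβ0
    calc ‖Matrix.toEuclideanLin T x‖
        ≤ ‖Matrix.toEuclideanLin ((F - F') * F'd) a‖
          + ‖Matrix.toEuclideanLin (P * (1 - Q)) (w - a)‖ := by rw [hTx]; exact norm_sub_le _ _
      _ ≤ spNorm ((F - F') * F'd) * ‖a‖ + spNorm (P * (1 - Q)) * ‖w - a‖ :=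
          add_le_add (le_spNorm _ _) (le_spNorm _ _)
      _ ≤ (ε * β) * ‖a‖ + (ε * β) * ‖w - a‖ :=
          add_le_add (mul_le_mul_of_nonneg_right hM1 (norm_nonneg a))
            (mul_le_mul_of_nonneg_right hM2 (norm_nonneg (w - a)))
      _ = (ε * β) * (‖a‖ + ‖w - a‖) := by ring
      _ ≤ (ε * β) * (Real.sqrt 2 * ‖w‖) := mul_le_mul_of_nonneg_left hsum hεβ0
      _ ≤ (ε * β) * (Real.sqrt 2 * ‖x‖) := by
          apply mul_le_mul_of_nonneg_left _ hεβ0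
          exact mul_le_mul_of_nonneg_left hwx (Real.sqrt_nonneg 2)
      _ = Real.sqrt 2 * (ε * β) * ‖x‖ := by ring
  -- final assembly
  rw [hDid]
  calc spNorm (Fd * ((L - L') - T)) ≤ α * spNorm ((L - L') - T) := spNorm_mul_le _ _
    _ ≤ α * (spNorm (L - L') + spNorm T) :=
        mul_le_mul_of_nonneg_left (spNorm_sub_le _ _) hα0
    _ ≤ α * (ε + Real.sqrt 2 * (ε * β)) :=
        mul_le_mul_of_nonneg_left (add_le_add hEl hTbound) hα0
    _ = α * ε * (1 + Real.sqrt 2 * β) := by ring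

end SP8

namespace SP9
open SP SP2 SP3 SP4 SP5 SP6 SP7 SP8

lemma spNorm_orth_mul {r m : ℕ} {Z : Matrix (Fin r) (Fin r) ℝ} (hZ : Zᵀ * Z = 1)
    (M : Matrix (Fin r) (Fin m) ℝ) : spNorm (Z * M) = spNorm M := by
  have hiso : ∀ x : EuclideanSpace ℝ (Fin m),
      ‖Matrix.toEuclideanLin (Z * M) x‖ = ‖Matrix.toEuclideanLin M x‖ := by
    intro x
    rw [toEL_mul]
    exact norm_orthonormal hZ _
  apply le_antisymm
  · apply spNorm_le (spNorm_nonneg M)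
    intro x; rw [hiso x]; exact le_spNorm M x
  · apply spNorm_le (spNorm_nonneg (Z * M))
    intro x; rw [← hiso x]; exact le_spNorm (Z * M) x

end SP9

/-- For `Z` orthogonal and `Υ_f, Υ̂_f` of full column rank `r`,
with `A_r = Υ_f^† Υ_l` and `Â_r = Υ̂_f^† Υ̂_l`,
`‖A_r − Z Â_r Zᵀ‖₂ ≤ ‖Υ_f^†‖₂ ‖U − Û Zᵀ‖₂ (1 + √2 ‖Υ̂_f^†‖₂)`. -/
theorem system_matrix_perturbation (p l r : ℕ) (hp : 1 ≤ p) (hl : 1 ≤ l)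
    (U Uh : Matrix (Fin (p + l)) (Fin r) ℝ)
    (hU : Uᵀ * U = 1) (hUh : Uhᵀ * Uh = 1)
    (Z : Matrix (Fin r) (Fin r) ℝ) (hZ : Zᵀ * Z = 1)
    (hrank : (firstRows U).rank = r) (hrankh : (firstRows Uh).rank = r) :
    spNorm (pinv (firstRows U) * lastRows U -
        Z * (pinv (firstRows Uh) * lastRows Uh) * Zᵀ) ≤
      spNorm (pinv (firstRows U)) * spNorm (U - Uh * Zᵀ) *
        (1 + Real.sqrt 2 * spNorm (pinv (firstRows Uh))) := by
  have hZZ : Z * Zᵀ = 1 := mul_eq_one_comm.mp hZ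
  set V := Uh * Zᵀ with hVdef
  set Fh := firstRows Uh with hFh
  have hfV : firstRows V = Fh * Zᵀ := rfl
  have hlV : lastRows V = lastRows Uh * Zᵀ := rfl
  have hVo : Vᵀ * V = 1 := by
    rw [hVdef, Matrix.transpose_mul, Matrix.transpose_transpose]
    calc Z * Uhᵀ * (Uh * Zᵀ) = Z * (Uhᵀ * Uh) * Zᵀ := by simp only [Matrix.mul_assoc]
      _ = 1 := by rw [hUh, Matrix.mul_one, hZZ]
  have hgram : IsUnit (Fhᵀ * Fh) := SP5.isUnit_gram hrankh
  have hgramU : IsUnit ((firstRows U)ᵀ * firstRows U) := SP5.isUnit_gram hrank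
  have hZu : IsUnit Z := (Matrix.isUnit_iff_isUnit_det _).mpr (Matrix.isUnit_det_of_left_inverse hZ)
  have hZtu : IsUnit (Zᵀ) := (Matrix.isUnit_iff_isUnit_det _).mpr (Matrix.isUnit_det_of_left_inverse hZZ)
  have hZinv : Z⁻¹ = Zᵀ := Matrix.inv_eq_left_inv hZ
  have hZtinv : (Zᵀ)⁻¹ = Z := Matrix.inv_eq_left_inv hZZ
  -- pinv of firstRows V
  have hpinvV : pinv (firstRows V) = Z * pinv Fh := by
    rw [hfV]
    show ((Fh * Zᵀ)ᵀ * (Fh * Zᵀ))⁻¹ * (Fh * Zᵀ)ᵀ = Z * ((Fhᵀ * Fh)⁻¹ * Fhᵀ)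
    have h1 : (Fh * Zᵀ)ᵀ = Z * Fhᵀ := by
      rw [Matrix.transpose_mul, Matrix.transpose_transpose]
    rw [h1]
    have h2 : Z * Fhᵀ * (Fh * Zᵀ) = Z * (Fhᵀ * Fh) * Zᵀ := by
      simp only [Matrix.mul_assoc]
    rw [h2]
    have h3 : (Z * (Fhᵀ * Fh) * Zᵀ)⁻¹ = Z * (Fhᵀ * Fh)⁻¹ * Zᵀ := by
      rw [Matrix.mul_inv_rev, Matrix.mul_inv_rev, hZinv, hZtinv, Matrix.mul_assoc]
    rw [h3]
    calc Z * (Fhᵀ * Fh)⁻¹ * Zᵀ * (Z * Fhᵀ)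
        = Z * ((Fhᵀ * Fh)⁻¹ * ((Zᵀ * Z) * Fhᵀ)) := by simp only [Matrix.mul_assoc]
      _ = Z * ((Fhᵀ * Fh)⁻¹ * Fhᵀ) := by rw [hZ, Matrix.one_mul]
  have hV1 : IsUnit ((firstRows V)ᵀ * firstRows V) := by
    have h1 : (firstRows V)ᵀ * firstRows V = Z * ((Fhᵀ * Fh) * Zᵀ) := by
      rw [hfV, Matrix.transpose_mul, Matrix.transpose_transpose]
      simp only [Matrix.mul_assoc]
    rw [h1]
    exact hZu.mul (hgram.mul hZtu)
  -- rewrite the LHS matrix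
  have hmat : Z * (pinv Fh * lastRows Uh) * Zᵀ = pinv (firstRows V) * lastRows V := by
    rw [hpinvV, hlV]
    simp only [Matrix.mul_assoc]
  have hsp : spNorm (pinv (firstRows V)) = spNorm (pinv Fh) := by
    rw [hpinvV]
    exact SP9.spNorm_orth_mul hZ _
  rw [hmat, ← hsp]
  exact SP8.main_lemma U V hVo hgramU hV1
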